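/- Assume all pairwise distances between distinct pairs of points of S are distinct (so minimum spanning trees are unique). Then every red edge of a minimum red-blue-purple spanning graph is an edge of the Euclidean minimum spanning tree of R ∪ P, and every blue edge is an edge of the Euclidean minimum spanning tree of B ∪ P. -/

import Mathlib

open scoped Classical

noncomputable section

/-- The Euclidean plane. -/
abbrev Pt : Type := EuclideanSpace ℝ (Fin 2)

/-- The simple graph on the plane whose edge set is the finite set `E`. -/
def graphOf (E : Finset (Sym2 Pt)) : SimpleGraph Pt where
  Adj x y := x ≠ y ∧ s(x, y) ∈ E
  symm := ⟨fun x y ⟨hne, he⟩ => ⟨hne.symm, by rwa [Sym2.eq_swap]⟩⟩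
  loopless := ⟨fun x ⟨hne, _⟩ => hne rfl⟩

/-- Euclidean length of an edge. -/
def edgeLen (e : Sym2 Pt) : ℝ :=
  Sym2.lift ⟨fun x y => dist x y, fun _ _ => dist_comm _ _⟩ e

/-- Total Euclidean length of a finite edge set. -/
def weight (E : Finset (Sym2 Pt)) : ℝ := ∑ e ∈ E, edgeLen e

/-- One step of connectivity inside `Q` using an edge from `E`. -/
def Step (E : Finset (Sym2 Pt)) (Q : Finset Pt) (a b : Pt) : Prop :=
  a ∈ Q ∧ b ∈ Q ∧ a ≠ b ∧ s(a, b) ∈ E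

def Conn (E : Finset (Sym2 Pt)) (Q : Finset Pt) : Pt → Pt → Prop :=
  Relation.ReflTransGen (Step E Q)

lemma Step.symm' {E Q} {a b : Pt} (h : Step E Q a b) : Step E Q b a :=
  ⟨h.2.1, h.1, h.2.2.1.symm, by rw [Sym2.eq_swap]; exact h.2.2.2⟩

lemma Conn.symm' {E Q} {a b : Pt} (h : Conn E Q a b) : Conn E Q b a :=
  (@Relation.ReflTransGen.stdSymm _ _ ⟨fun _ _ hs => hs.symm'⟩).symm _ _ h

lemma Step.conn {E Q} {a b : Pt} (h : Step E Q a b) : Conn E Q a b :=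
  Relation.ReflTransGen.single h

lemma conn_transfer {E F : Finset (Sym2 Pt)} {Q : Finset Pt}
    (h : ∀ a b, Step E Q a b → Conn F Q a b) {a b : Pt} (hc : Conn E Q a b) :
    Conn F Q a b := by
  induction hc with
  | refl => exact Relation.ReflTransGen.refl
  | tail _ hst ih => exact ih.trans (h _ _ hst)

lemma conn_mono {E F : Finset (Sym2 Pt)} {Q : Finset Pt} (hEF : E ⊆ F)
    {a b : Pt} (hc : Conn E Q a b) : Conn F Q a b :=
  conn_transfer (fun _ _ hs => (Step.conn ⟨hs.1, hs.2.1, hs.2.2.1, hEF hs.2.2.2⟩)) hc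

lemma edgeLen_mk (x y : Pt) : edgeLen s(x, y) = dist x y := by
  unfold edgeLen; rw [Sym2.lift_mk]

lemma edgeLen_nonneg (e : Sym2 Pt) : 0 ≤ edgeLen e := by
  induction e using Sym2.ind with
  | _ x y => rw [edgeLen_mk]; exact dist_nonneg

lemma weight_erase {E : Finset (Sym2 Pt)} {e : Sym2 Pt} (he : e ∈ E) :
    weight (E.erase e) = weight E - edgeLen e := by
  have := Finset.sum_erase_add E edgeLen he
  unfold weight; linarith

lemma weight_insert {E : Finset (Sym2 Pt)} {e : Sym2 Pt} (he : e ∉ E) :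
    weight (insert e E) = edgeLen e + weight E := by
  unfold weight; rw [Finset.sum_insert he]

lemma weight_mono {E F : Finset (Sym2 Pt)} (h : E ⊆ F) : weight E ≤ weight F :=
  Finset.sum_le_sum_of_subset_of_nonneg h (fun e _ _ => edgeLen_nonneg e)

/-- Translation: a walk in a subgraph-like graph on `↑Q` gives `Conn`. -/
lemma walk_to_conn {Q : Finset Pt} {F : Finset (Sym2 Pt)} {G' : SimpleGraph ↑Q}
    (hG' : ∀ p q : ↑Q, G'.Adj p q → Step F Q ↑p ↑q) {p q : ↑Q} (w : G'.Walk p q) :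
    Conn F Q ↑p ↑q := by
  induction w with
  | nil => exact Relation.ReflTransGen.refl
  | cons h _ ih => exact (Step.conn (hG' _ _ h)).trans ih

lemma induce_adj_iff {F : Finset (Sym2 Pt)} {Q : Finset Pt} {p q : ↑Q} :
    ((graphOf F).induce (↑Q : Set Pt)).Adj p q ↔ (↑p : Pt) ≠ ↑q ∧ s((↑p : Pt), ↑q) ∈ F :=
  Iff.rfl

lemma induce_adj_step {F : Finset (Sym2 Pt)} {Q : Finset Pt} {p q : ↑Q}
    (h : ((graphOf F).induce (↑Q : Set Pt)).Adj p q) : Step F Q ↑p ↑q :=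
  ⟨p.2, q.2, h.1, h.2⟩

lemma conn_total_of_connected {F : Finset (Sym2 Pt)} {Q : Finset Pt}
    (h : ((graphOf F).induce (↑Q : Set Pt)).Connected) :
    ∀ a ∈ Q, ∀ b ∈ Q, Conn F Q a b := by
  intro a ha b hb
  obtain ⟨w⟩ := h.preconnected ⟨a, ha⟩ ⟨b, hb⟩
  exact walk_to_conn (fun _ _ h => induce_adj_step h) w

lemma conn_to_reachable {F : Finset (Sym2 Pt)} {Q : Finset Pt} {a b : Pt}
    (h : Conn F Q a b) : ∀ (ha : a ∈ Q) (hb : b ∈ Q),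
      ((graphOf F).induce (↑Q : Set Pt)).Reachable ⟨a, ha⟩ ⟨b, hb⟩ := by
  induction h using Relation.ReflTransGen.head_induction_on with
  | refl => intro ha hb; rfl
  | head hs _ ih =>
    intro ha hb
    exact (SimpleGraph.Adj.reachable
      (show ((graphOf F).induce (↑Q : Set Pt)).Adj ⟨_, ha⟩ ⟨_, hs.2.1⟩ from
        ⟨hs.2.2.1, hs.2.2.2⟩)).trans (ih hs.2.1 hb)

lemma connected_of_conn_total {F : Finset (Sym2 Pt)} {Q : Finset Pt}
    (hQ : Q.Nonempty) (h : ∀ a ∈ Q, ∀ b ∈ Q, Conn F Q a b) :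
    ((graphOf F).induce (↑Q : Set Pt)).Connected := by
  have : Nonempty (↑(↑Q : Set Pt)) := ⟨⟨hQ.choose, by simpa using hQ.choose_spec⟩⟩
  refine ⟨fun p q => ?_⟩
  have := conn_to_reachable (h ↑p p.2 ↑q q.2) p.2 q.2
  simpa using this

/-- After removing an edge `s(x,y)`, every vertex connected to `x` is connected
to `x` or to `y` in the smaller edge set. -/
lemma two_sides {E : Finset (Sym2 Pt)} {Q : Finset Pt} {x y z : Pt}
    (h : Conn E Q z x) :
    Conn (E.erase s(x, y)) Q z x ∨ Conn (E.erase s(x, y)) Q z y := by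
  induction h using Relation.ReflTransGen.head_induction_on with
  | refl => exact Or.inl Relation.ReflTransGen.refl
  | @head a c hs _ ih =>
    by_cases hg : s(a, c) = s(x, y)
    · rcases Sym2.eq_iff.mp hg with ⟨rfl, rfl⟩ | ⟨rfl, rfl⟩
      · exact Or.inl Relation.ReflTransGen.refl
      · exact Or.inr Relation.ReflTransGen.refl
    · have hst : Step (E.erase s(x, y)) Q a c :=
        ⟨hs.1, hs.2.1, hs.2.2.1, Finset.mem_erase.mpr ⟨hg, hs.2.2.2⟩⟩
      rcases ih with h' | h'
      · exact Or.inl (hst.conn.trans h')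
      · exact Or.inr (hst.conn.trans h')

/-- `E` is the edge set of a red-blue-purple spanning graph of `(R, B, P)`. -/
def IsRBP (R B P : Finset Pt) (E : Finset (Sym2 Pt)) : Prop :=
  (∀ e ∈ E, ¬ e.IsDiag) ∧
  (∀ e ∈ E, ∀ x ∈ e, x ∈ R ∪ B ∪ P) ∧
  ((graphOf E).induce (↑(R ∪ P) : Set Pt)).Connected ∧
  ((graphOf E).induce (↑(B ∪ P) : Set Pt)).Connected

/-- `E` is the edge set of a minimum red-blue-purple spanning graph of `(R, B, P)`. -/
def IsMinRBP (R B P : Finset Pt) (E : Finset (Sym2 Pt)) : Prop :=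
  IsRBP R B P E ∧ ∀ E', IsRBP R B P E' → weight E ≤ weight E'

/-- `T` is the edge set of a spanning tree on the point set `Q`. -/
def IsSpanningTreeOn (Q : Finset Pt) (T : Finset (Sym2 Pt)) : Prop :=
  (∀ e ∈ T, ¬ e.IsDiag) ∧
  (∀ e ∈ T, ∀ x ∈ e, x ∈ Q) ∧
  ((graphOf T).induce (↑Q : Set Pt)).IsTree

/-- `T` is the edge set of a Euclidean minimum spanning tree of `Q`. -/
def IsEMST (Q : Finset Pt) (T : Finset (Sym2 Pt)) : Prop :=
  IsSpanningTreeOn Q T ∧ ∀ T', IsSpanningTreeOn Q T' → weight T ≤ weight T'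

lemma exists_spanning_tree_subset (Q : Finset Pt) (hQ : Q.Nonempty) (E : Finset (Sym2 Pt)) :
    (∀ e ∈ E, ¬ e.IsDiag) → (∀ e ∈ E, ∀ x ∈ e, x ∈ Q) →
    (∀ a ∈ Q, ∀ b ∈ Q, Conn E Q a b) →
    ∃ T ⊆ E, IsSpanningTreeOn Q T := by
  induction E using Finset.strongInduction with
  | _ E ih =>
    intro h1 h2 h3
    by_cases hac : ((graphOf E).induce (↑Q : Set Pt)).IsAcyclic
    · exact ⟨E, le_refl _, h1, h2, ⟨connected_of_conn_total hQ h3, hac⟩⟩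
    · unfold SimpleGraph.IsAcyclic at hac
      push_neg at hac
      obtain ⟨v, c, hc⟩ := hac
      cases c with
      | nil => exact absurd rfl hc.ne_nil
      | cons hadj q =>
        rename_i w1
        have hmem : s(v, w1) ∈ (SimpleGraph.Walk.cons hadj q).edges := by
          rw [SimpleGraph.Walk.edges_cons]; exact List.mem_cons_self
        have hnb : ¬ ((graphOf E).induce (↑Q : Set Pt)).IsBridge s(v, w1) := by
          rw [SimpleGraph.isBridge_iff_adj_and_forall_cycle_notMem]
          intro hall
          exact hall _ hc hmem
          exact hadj
        rw [SimpleGraph.isBridge_iff] at hnb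
        push_neg at hnb
        have hreach : (((graphOf E).induce (↑Q : Set Pt)) \ SimpleGraph.fromEdgeSet {s(v, w1)}).Reachable v w1 :=
          hnb
        -- the Pt-level edge
        set e : Sym2 Pt := s((↑v : Pt), ↑w1) with he
        have hstep : ∀ p q : (↑Q : Set Pt),
            ((((graphOf E).induce (↑Q : Set Pt))) \ SimpleGraph.fromEdgeSet {s(v, w1)}).Adj p q → Step (E.erase e) Q ↑p ↑q := by
          intro p q hpq
          rw [SimpleGraph.sdiff_adj] at hpq
          obtain ⟨hH', hnot⟩ := hpq
          have hpe : s((↑p : Pt), ↑q) ≠ e := by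
            intro heq
            apply hnot
            rw [SimpleGraph.fromEdgeSet_adj]
            refine ⟨?_, fun h => hH'.1 (congrArg _ h)⟩
            rcases Sym2.eq_iff.mp heq with ⟨h1', h2'⟩ | ⟨h1', h2'⟩
            · rw [Subtype.ext h1', Subtype.ext h2']; rfl
            · rw [Subtype.ext h1', Subtype.ext h2', Sym2.eq_swap]; rfl
          exact ⟨p.2, q.2, hH'.1, Finset.mem_erase.mpr ⟨hpe, hH'.2⟩⟩
        have hconn1 : Conn (E.erase e) Q ↑v ↑w1 := by
          obtain ⟨w⟩ := hreach
          exact walk_to_conn hstep w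
        have heE : e ∈ E := hadj.2
        have hss : E.erase e ⊂ E := Finset.erase_ssubset heE
        obtain ⟨T, hT1, hT2⟩ := ih (E.erase e) hss
          (fun f hf => h1 f (Finset.mem_of_mem_erase hf))
          (fun f hf => h2 f (Finset.mem_of_mem_erase hf))
          (by
            intro a ha b hb
            refine conn_transfer ?_ (h3 a ha b hb)
            intro a' b' hs'
            by_cases hg : s(a', b') = e
            · rcases Sym2.eq_iff.mp hg with ⟨h1', h2'⟩ | ⟨h1', h2'⟩
              · subst h1'; subst h2'; exact hconn1
              · subst h1'; subst h2'; exact hconn1.symm'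
            · exact Step.conn ⟨hs'.1, hs'.2.1, hs'.2.2.1, Finset.mem_erase.mpr ⟨hg, hs'.2.2.2⟩⟩)
        exact ⟨T, hT1.trans (Finset.erase_subset _ _), hT2⟩

lemma exists_crossing_edge {V : Type} (G : SimpleGraph V) (P : V → Prop) :
    ∀ {u v : V} (w : G.Walk u v), w.IsPath → P u → ¬ P v →
    ∃ a b, G.Adj a b ∧ P a ∧ ¬ P b ∧ s(a, b) ∈ w.edges ∧
      (G.deleteEdges {s(a, b)}).Reachable u a ∧ (G.deleteEdges {s(a, b)}).Reachable b v := by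
  intro u v w
  induction w with
  | nil => intro _ hu hv; exact absurd hu hv
  | cons hadj q ih =>
    rename_i u' w1 v'
    intro hp hu hv
    have hnodup := hp.edges_nodup
    rw [SimpleGraph.Walk.edges_cons] at hnodup
    have hhead : s(u', w1) ∉ q.edges := (List.nodup_cons.mp hnodup).1
    by_cases hw1 : P w1
    · obtain ⟨a, b, hab, hPa, hPb, hmemq, r1, r2⟩ := ih hp.of_cons hw1 hv
      have hne : s(u', w1) ≠ s(a, b) := fun he => hhead (he ▸ hmemq)
      refine ⟨a, b, hab, hPa, hPb, ?_, ?_, r2⟩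
      · rw [SimpleGraph.Walk.edges_cons]; exact List.mem_cons_of_mem _ hmemq
      · refine (SimpleGraph.Adj.reachable ?_).trans r1
        rw [SimpleGraph.deleteEdges_adj]
        exact ⟨hadj, by simpa using hne⟩
    · refine ⟨u', w1, hadj, hu, hw1, ?_, SimpleGraph.Reachable.refl _, ?_⟩
      · rw [SimpleGraph.Walk.edges_cons]; exact List.mem_cons_self
      · have hnot : ∀ e ∈ q.edges, e ∉ ({s(u', w1)} : Set (Sym2 V)) := by
          intro e he hmem
          rw [Set.mem_singleton_iff] at hmem
          subst hmem
          exact hhead he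
        exact ⟨q.toDeleteEdges _ hnot⟩

lemma cut_min_in_mst (U Q : Finset Pt) (hQU : Q ⊆ U)
    (hgen : ∀ u v u' v' : Pt, u ∈ U → v ∈ U → u' ∈ U → v' ∈ U → u ≠ v → u' ≠ v' →
      dist u v = dist u' v' → s(u, v) = s(u', v'))
    (T : Finset (Sym2 Pt)) (hT : IsSpanningTreeOn Q T)
    (hTmin : ∀ T', IsSpanningTreeOn Q T' → weight T ≤ weight T')
    (p : Pt → Prop) {u v : Pt} (hu : u ∈ Q) (hv : v ∈ Q) (hpu : p u) (hpv : ¬ p v)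
    (hmin : ∀ a b : Pt, a ∈ Q → b ∈ Q → p a → ¬ p b → a ≠ b → dist u v ≤ dist a b)
    (huv : u ≠ v) :
    s(u, v) ∈ T := by
  by_contra hf
  obtain ⟨hT1, hT2, hT3⟩ := hT
  have hconnH := hT3.isConnected
  obtain ⟨w0⟩ := hconnH.preconnected ⟨u, hu⟩ ⟨v, hv⟩
  obtain ⟨a', b', hab, hPa, hPb, hmemq, r1, r2⟩ :=
    exists_crossing_edge _ (fun z : (↑Q : Set Pt) => p ↑z) w0.bypass
      (SimpleGraph.Walk.bypass_isPath w0) hpu hpv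
  have ha'Q : (↑a' : Pt) ∈ Q := a'.2
  have hb'Q : (↑b' : Pt) ∈ Q := b'.2
  have hgT : s((↑a' : Pt), ↑b') ∈ T := hab.2
  have hne_ab : (↑a' : Pt) ≠ ↑b' := hab.1
  have hstep : ∀ p' q' : (↑Q : Set Pt),
      (((graphOf T).induce (↑Q : Set Pt)).deleteEdges {s(a', b')}).Adj p' q' →
      Step (T.erase s((↑a' : Pt), ↑b')) Q ↑p' ↑q' := by
    intro p' q' hpq
    rw [SimpleGraph.deleteEdges_adj] at hpq
    obtain ⟨hH', hnot⟩ := hpq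
    have hpe : s((↑p' : Pt), ↑q') ≠ s((↑a' : Pt), ↑b') := by
      intro heq
      apply hnot
      rw [Set.mem_singleton_iff]
      rcases Sym2.eq_iff.mp heq with ⟨h1', h2'⟩ | ⟨h1', h2'⟩
      · rw [Subtype.ext h1', Subtype.ext h2']
      · rw [Subtype.ext h1', Subtype.ext h2', Sym2.eq_swap]
    exact ⟨p'.2, q'.2, hH'.1, Finset.mem_erase.mpr ⟨hpe, hH'.2⟩⟩
  have c1 : Conn (T.erase s((↑a' : Pt), ↑b')) Q u ↑a' := walk_to_conn hstep r1.some
  have c2 : Conn (T.erase s((↑a' : Pt), ↑b')) Q ↑b' v := walk_to_conn hstep r2.some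
  have hlt : dist u v < dist (↑a' : Pt) ↑b' := by
    refine lt_of_le_of_ne (hmin _ _ ha'Q hb'Q hPa hPb hne_ab) ?_
    intro heq
    have hEq := hgen u v ↑a' ↑b' (hQU hu) (hQU hv) (hQU ha'Q) (hQU hb'Q) huv hne_ab heq
    exact hf (hEq ▸ hgT)
  have hfnotin : s(u, v) ∉ T.erase s((↑a' : Pt), ↑b') := fun h => hf (Finset.mem_of_mem_erase h)
  have hwT' : weight (insert s(u, v) (T.erase s((↑a' : Pt), ↑b'))) =
      dist u v + (weight T - dist (↑a' : Pt) ↑b') := by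
    rw [weight_insert hfnotin, weight_erase hgT, edgeLen_mk, edgeLen_mk]
  have hconnT' : ∀ z ∈ Q, ∀ w ∈ Q, Conn (insert s(u, v) (T.erase s((↑a' : Pt), ↑b'))) Q z w := by
    intro z hz w hw
    refine conn_transfer ?_ (conn_total_of_connected hconnH z hz w hw)
    intro a1 b1 hs
    by_cases hg : s(a1, b1) = s((↑a' : Pt), ↑b')
    · have key : Conn (insert s(u, v) (T.erase s((↑a' : Pt), ↑b'))) Q ↑a' ↑b' := by
        have m1 := conn_mono (Finset.subset_insert s(u, v) _) c1
        have m2 := conn_mono (Finset.subset_insert s(u, v) _) c2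
        have mf : Conn (insert s(u, v) (T.erase s((↑a' : Pt), ↑b'))) Q u v :=
          Step.conn ⟨hu, hv, huv, Finset.mem_insert_self _ _⟩
        exact (m1.symm'.trans mf).trans m2.symm'
      rcases Sym2.eq_iff.mp hg with ⟨rfl, rfl⟩ | ⟨rfl, rfl⟩
      · exact key
      · exact key.symm'
    · exact Step.conn ⟨hs.1, hs.2.1, hs.2.2.1,
        Finset.mem_insert.mpr (Or.inr (Finset.mem_erase.mpr ⟨hg, hs.2.2.2⟩))⟩
  obtain ⟨T'', hsub, hst⟩ := exists_spanning_tree_subset Q ⟨u, hu⟩ _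
    (by
      intro e he
      rcases Finset.mem_insert.mp he with rfl | he'
      · rw [Sym2.mk_isDiag_iff]; exact huv
      · exact hT1 e (Finset.mem_of_mem_erase he'))
    (by
      intro e he x hx
      rcases Finset.mem_insert.mp he with rfl | he'
      · rcases Sym2.mem_iff.mp hx with rfl | rfl
        · exact hu
        · exact hv
      · exact hT2 e (Finset.mem_of_mem_erase he') x hx)
    hconnT'
  have h1 := hTmin T'' hst
  have h2 : weight T'' ≤ weight (insert s(u, v) (T.erase s((↑a' : Pt), ↑b'))) := weight_mono hsub
  linarith

lemma master (U Q Qo : Finset Pt) (hQU : Q ⊆ U)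
    (hgen : ∀ u v u' v' : Pt, u ∈ U → v ∈ U → u' ∈ U → v' ∈ U → u ≠ v → u' ≠ v' →
      dist u v = dist u' v' → s(u, v) = s(u', v'))
    (T : Finset (Sym2 Pt)) (hT : IsSpanningTreeOn Q T)
    (hTmin : ∀ T', IsSpanningTreeOn Q T' → weight T ≤ weight T')
    (E : Finset (Sym2 Pt))
    (hE1 : ∀ e ∈ E, ¬ e.IsDiag) (hE2 : ∀ e ∈ E, ∀ x ∈ e, x ∈ U)
    (hEc : ∀ a ∈ Q, ∀ b ∈ Q, Conn E Q a b)
    (hEco : ∀ a ∈ Qo, ∀ b ∈ Qo, Conn E Qo a b)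
    (hmin : ∀ E', (∀ e ∈ E', ¬ e.IsDiag) → (∀ e ∈ E', ∀ x ∈ e, x ∈ U) →
      (∀ a ∈ Q, ∀ b ∈ Q, Conn E' Q a b) → (∀ a ∈ Qo, ∀ b ∈ Qo, Conn E' Qo a b) →
      weight E ≤ weight E')
    {x y : Pt} (hxy : s(x, y) ∈ E) (hx : x ∈ Q) (hy : y ∈ Q)
    (hxo : x ∉ Qo ∨ y ∉ Qo) :
    s(x, y) ∈ T := by
  have hxyne : x ≠ y := by
    have := hE1 _ hxy
    rwa [Sym2.mk_isDiag_iff] at this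
  -- steps inside Qo never use the edge s(x,y)
  have hQostep : ∀ (F : Finset (Sym2 Pt)), ∀ a b : Pt, Step F Qo a b →
      s(a, b) ≠ s(x, y) := by
    intro F a b hs heq
    rcases Sym2.eq_iff.mp heq with ⟨rfl, rfl⟩ | ⟨rfl, rfl⟩
    · rcases hxo with h | h
      · exact h hs.1
      · exact h hs.2.1
    · rcases hxo with h | h
      · exact h hs.2.1
      · exact h hs.1
  by_cases hbr : Conn (E.erase s(x, y)) Q x y
  · -- not a bridge: erase it, contradiction with minimality
    exfalso
    have h1 : ∀ e ∈ E.erase s(x, y), ¬ e.IsDiag :=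
      fun e he => hE1 e (Finset.mem_of_mem_erase he)
    have h2 : ∀ e ∈ E.erase s(x, y), ∀ z ∈ e, z ∈ U :=
      fun e he => hE2 e (Finset.mem_of_mem_erase he)
    have h3 : ∀ a ∈ Q, ∀ b ∈ Q, Conn (E.erase s(x, y)) Q a b := by
      intro a ha b hb
      refine conn_transfer ?_ (hEc a ha b hb)
      intro a' b' hs
      by_cases hg : s(a', b') = s(x, y)
      · rcases Sym2.eq_iff.mp hg with ⟨rfl, rfl⟩ | ⟨rfl, rfl⟩
        · exact hbr
        · exact hbr.symm'
      · exact Step.conn ⟨hs.1, hs.2.1, hs.2.2.1, Finset.mem_erase.mpr ⟨hg, hs.2.2.2⟩⟩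
    have h4 : ∀ a ∈ Qo, ∀ b ∈ Qo, Conn (E.erase s(x, y)) Qo a b := by
      intro a ha b hb
      refine conn_transfer ?_ (hEco a ha b hb)
      intro a' b' hs
      exact Step.conn ⟨hs.1, hs.2.1, hs.2.2.1,
        Finset.mem_erase.mpr ⟨hQostep E a' b' hs, hs.2.2.2⟩⟩
    have hw := hmin _ h1 h2 h3 h4
    have hwe : weight (E.erase s(x, y)) = weight E - dist x y := by
      rw [weight_erase hxy, edgeLen_mk]
    have hpos : 0 < dist x y := dist_pos.mpr hxyne
    linarith
  · -- bridge case
    have hcx : x ∈ Q.filter (fun z => Conn (E.erase s(x, y)) Q x z) :=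
      Finset.mem_filter.mpr ⟨hx, Relation.ReflTransGen.refl⟩
    have hcy : y ∈ Q.filter (fun z => Conn (E.erase s(x, y)) Q y z) :=
      Finset.mem_filter.mpr ⟨hy, Relation.ReflTransGen.refl⟩
    obtain ⟨⟨u, v⟩, hmemuv, hminuv⟩ := Finset.exists_min_image
      ((Q.filter (fun z => Conn (E.erase s(x, y)) Q x z)) ×ˢ
        (Q.filter (fun z => Conn (E.erase s(x, y)) Q y z)))
      (fun pr => dist pr.1 pr.2)
      ⟨(x, y), Finset.mem_product.mpr ⟨hcx, hcy⟩⟩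
    rw [Finset.mem_product] at hmemuv
    obtain ⟨huC, hvC⟩ := hmemuv
    have huQ : u ∈ Q := (Finset.mem_filter.mp huC).1
    have hvQ : v ∈ Q := (Finset.mem_filter.mp hvC).1
    have hxu : Conn (E.erase s(x, y)) Q x u := (Finset.mem_filter.mp huC).2
    have hyv : Conn (E.erase s(x, y)) Q y v := (Finset.mem_filter.mp hvC).2
    have huvne : u ≠ v := by
      rintro rfl
      exact hbr (hxu.trans hyv.symm')
    have hpu : Conn (E.erase s(x, y)) Q x u := hxu
    have hpv : ¬ Conn (E.erase s(x, y)) Q x v := fun h => hbr (h.trans hyv.symm')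
    have hminp : ∀ a b : Pt, a ∈ Q → b ∈ Q → Conn (E.erase s(x, y)) Q x a →
        ¬ Conn (E.erase s(x, y)) Q x b → a ≠ b → dist u v ≤ dist a b := by
      intro a b ha hb hpa hpb hab
      have hbxy : Conn (E.erase s(x, y)) Q b x ∨ Conn (E.erase s(x, y)) Q b y :=
        two_sides (hEc b hb x hx)
      have hbCy : b ∈ Q.filter (fun z => Conn (E.erase s(x, y)) Q y z) := by
        rcases hbxy with h | h
        · exact absurd h.symm' hpb
        · exact Finset.mem_filter.mpr ⟨hb, h.symm'⟩
      have haCx : a ∈ Q.filter (fun z => Conn (E.erase s(x, y)) Q x z) :=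
        Finset.mem_filter.mpr ⟨ha, hpa⟩
      exact hminuv (a, b) (Finset.mem_product.mpr ⟨haCx, hbCy⟩)
    have hfT : s(u, v) ∈ T :=
      cut_min_in_mst U Q hQU hgen T hT hTmin
        (fun z => Conn (E.erase s(x, y)) Q x z) huQ hvQ hpu hpv hminp huvne
    have hle : dist u v ≤ dist x y :=
      hminuv (x, y) (Finset.mem_product.mpr ⟨hcx, hcy⟩)
    by_cases heq : dist u v = dist x y
    · have hEq := hgen u v x y (hQU huQ) (hQU hvQ) (hQU hx) (hQU hy) huvne hxyne heq
      exact hEq ▸ hfT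
    · exfalso
      have hlt : dist u v < dist x y := lt_of_le_of_ne hle heq
      have hnot : s(u, v) ∉ E.erase s(x, y) := by
        intro h
        exact hbr ((hxu.trans (Step.conn ⟨huQ, hvQ, huvne, h⟩)).trans hyv.symm')
      have h1 : ∀ e ∈ insert s(u, v) (E.erase s(x, y)), ¬ e.IsDiag := by
        intro e he
        rcases Finset.mem_insert.mp he with rfl | he'
        · rw [Sym2.mk_isDiag_iff]; exact huvne
        · exact hE1 e (Finset.mem_of_mem_erase he')
      have h2 : ∀ e ∈ insert s(u, v) (E.erase s(x, y)), ∀ z ∈ e, z ∈ U := by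
        intro e he z hz
        rcases Finset.mem_insert.mp he with rfl | he'
        · rcases Sym2.mem_iff.mp hz with rfl | rfl
          · exact hQU huQ
          · exact hQU hvQ
        · exact hE2 e (Finset.mem_of_mem_erase he') z hz
      have h3 : ∀ a ∈ Q, ∀ b ∈ Q, Conn (insert s(u, v) (E.erase s(x, y))) Q a b := by
        intro a ha b hb
        refine conn_transfer ?_ (hEc a ha b hb)
        intro a' b' hs
        by_cases hg : s(a', b') = s(x, y)
        · have key : Conn (insert s(u, v) (E.erase s(x, y))) Q x y := by
            have m1 := conn_mono (Finset.subset_insert s(u, v) _) hxu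
            have m2 := conn_mono (Finset.subset_insert s(u, v) _) hyv
            have mf : Conn (insert s(u, v) (E.erase s(x, y))) Q u v :=
              Step.conn ⟨huQ, hvQ, huvne, Finset.mem_insert_self _ _⟩
            exact (m1.trans mf).trans m2.symm'
          rcases Sym2.eq_iff.mp hg with ⟨rfl, rfl⟩ | ⟨rfl, rfl⟩
          · exact key
          · exact key.symm'
        · exact Step.conn ⟨hs.1, hs.2.1, hs.2.2.1,
            Finset.mem_insert.mpr (Or.inr (Finset.mem_erase.mpr ⟨hg, hs.2.2.2⟩))⟩
      have h4 : ∀ a ∈ Qo, ∀ b ∈ Qo, Conn (insert s(u, v) (E.erase s(x, y))) Qo a b := by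
        intro a ha b hb
        refine conn_transfer ?_ (hEco a ha b hb)
        intro a' b' hs
        exact Step.conn ⟨hs.1, hs.2.1, hs.2.2.1,
          Finset.mem_insert.mpr (Or.inr (Finset.mem_erase.mpr ⟨hQostep E a' b' hs, hs.2.2.2⟩))⟩
      have hw := hmin _ h1 h2 h3 h4
      have hwe : weight (insert s(u, v) (E.erase s(x, y))) =
          dist u v + (weight E - dist x y) := by
        rw [weight_insert hnot, weight_erase hxy, edgeLen_mk, edgeLen_mk]
      linarith

lemma nonempty_of_connected {F : Finset (Sym2 Pt)} {Q : Finset Pt}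
    (h : ((graphOf F).induce (↑Q : Set Pt)).Connected) : Q.Nonempty := by
  obtain ⟨⟨z, hz⟩⟩ := h.nonempty
  exact ⟨z, by simpa using hz⟩


/-- if all pairwise distances between distinct pairs of points of `S`
are distinct, then every red edge of a minimum RBP spanning graph is an edge of the
Euclidean minimum spanning tree of `R ∪ P`, and every blue edge is an edge of the
Euclidean minimum spanning tree of `B ∪ P`. -/
theorem minRBP_red_blue_edges_in_MST (R B P : Finset Pt)
    (hRB : Disjoint R B) (hRP : Disjoint R P) (hBP : Disjoint B P)
    (hgen : ∀ u v u' v' : Pt, u ∈ R ∪ B ∪ P → v ∈ R ∪ B ∪ P →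
      u' ∈ R ∪ B ∪ P → v' ∈ R ∪ B ∪ P → u ≠ v → u' ≠ v' →
      dist u v = dist u' v' → s(u, v) = s(u', v'))
    (TR TB : Finset (Sym2 Pt))
    (hTR : IsEMST (R ∪ P) TR) (hTB : IsEMST (B ∪ P) TB)
    (E : Finset (Sym2 Pt)) (hE : IsMinRBP R B P E) :
    (∀ x y : Pt, s(x, y) ∈ E → x ∈ R ∪ P → y ∈ R ∪ P → (x ∈ R ∨ y ∈ R) →
      s(x, y) ∈ TR) ∧
    (∀ x y : Pt, s(x, y) ∈ E → x ∈ B ∪ P → y ∈ B ∪ P → (x ∈ B ∨ y ∈ B) →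
      s(x, y) ∈ TB) := by
  obtain ⟨⟨hE1, hE2, hEcR, hEcB⟩, hEmin⟩ := hE
  have hRPU : R ∪ P ⊆ R ∪ B ∪ P := by
    intro z hz
    rcases Finset.mem_union.mp hz with h | h
    · exact Finset.mem_union.mpr (Or.inl (Finset.mem_union.mpr (Or.inl h)))
    · exact Finset.mem_union.mpr (Or.inr h)
  have hBPU : B ∪ P ⊆ R ∪ B ∪ P := by
    intro z hz
    rcases Finset.mem_union.mp hz with h | h
    · exact Finset.mem_union.mpr (Or.inl (Finset.mem_union.mpr (Or.inr h)))
    · exact Finset.mem_union.mpr (Or.inr h)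
  have hRPne : (R ∪ P).Nonempty := nonempty_of_connected hEcR
  have hBPne : (B ∪ P).Nonempty := nonempty_of_connected hEcB
  have hRnotBP : ∀ z ∈ R, z ∉ B ∪ P := by
    intro z hz hmem
    rcases Finset.mem_union.mp hmem with h | h
    · exact Finset.disjoint_left.mp hRB hz h
    · exact Finset.disjoint_left.mp hRP hz h
  have hBnotRP : ∀ z ∈ B, z ∉ R ∪ P := by
    intro z hz hmem
    rcases Finset.mem_union.mp hmem with h | h
    · exact Finset.disjoint_left.mp hRB h hz
    · exact Finset.disjoint_left.mp hBP hz h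
  constructor
  · intro x y hxy hx hy hred
    refine master (R ∪ B ∪ P) (R ∪ P) (B ∪ P) hRPU hgen TR hTR.1 hTR.2 E hE1 hE2
      (conn_total_of_connected hEcR) (conn_total_of_connected hEcB) ?_ hxy hx hy ?_
    · intro E' h1 h2 h3 h4
      exact hEmin E' ⟨h1, h2, connected_of_conn_total hRPne h3,
        connected_of_conn_total hBPne h4⟩
    · rcases hred with h | h
      · exact Or.inl (hRnotBP x h)
      · exact Or.inr (hRnotBP y h)
  · intro x y hxy hx hy hblue
    refine master (R ∪ B ∪ P) (B ∪ P) (R ∪ P) hBPU hgen TB hTB.1 hTB.2 E hE1 hE2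
      (conn_total_of_connected hEcB) (conn_total_of_connected hEcR) ?_ hxy hx hy ?_
    · intro E' h1 h2 h3 h4
      exact hEmin E' ⟨h1, h2, connected_of_conn_total hRPne h4,
        connected_of_conn_total hBPne h3⟩
    · rcases hblue with h | h
      · exact Or.inl (hBnotRP x h)
      · exact Or.inr (hBnotRP y h)
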